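/- Let M₁, M₂, M₃, M₄ ∈ SL(2,ℂ) with M₁M₂M₃M₄ = I. Set aᵢ = trace(Mᵢ), x = trace(M₁M₂), y = trace(M₁M₃), z = trace(M₂M₃). Then xyz + x² + y² + z² − (a₁a₂ + a₃a₄)x − (a₁a₃ + a₂a₄)y − (a₁a₄ + a₂a₃)z + a₁a₂a₃a₄ + a₁² + a₂² + a₃² + a₄² − 4 = 0. -/

import Mathlib

theorem markov_equation_for_sl2_quadruples
    (M₁ M₂ M₃ M₄ : Matrix (Fin 2) (Fin 2) ℂ)
    (h₁ : M₁.det = 1) (h₂ : M₂.det = 1) (h₃ : M₃.det = 1) (h₄ : M₄.det = 1)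
    (hprod : M₁ * M₂ * M₃ * M₄ = 1)
    (a₁ a₂ a₃ a₄ x y z : ℂ)
    (ha₁ : a₁ = M₁.trace) (ha₂ : a₂ = M₂.trace) (ha₃ : a₃ = M₃.trace)
    (ha₄ : a₄ = M₄.trace)
    (hx : x = (M₁ * M₂).trace) (hy : y = (M₁ * M₃).trace)
    (hz : z = (M₂ * M₃).trace) :
    x * y * z + x ^ 2 + y ^ 2 + z ^ 2
      - (a₁ * a₂ + a₃ * a₄) * x - (a₁ * a₃ + a₂ * a₄) * y - (a₁ * a₄ + a₂ * a₃) * z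
      + a₁ * a₂ * a₃ * a₄ + a₁ ^ 2 + a₂ ^ 2 + a₃ ^ 2 + a₄ ^ 2 - 4 = 0 := by
  have hM₄ : M₄ = Matrix.of !![(M₁*M₂*M₃) 1 1, -((M₁*M₂*M₃) 0 1);
      -((M₁*M₂*M₃) 1 0), (M₁*M₂*M₃) 0 0] := by
    have hN : (M₁ * M₂ * M₃).det = 1 := by
      rw [Matrix.det_mul, Matrix.det_mul, h₁, h₂, h₃]; ring
    have hinv := Matrix.inv_eq_right_inv hprod
    rw [← hinv, Matrix.inv_def, Matrix.adjugate_fin_two, hN]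
    simp
    rfl
  subst hM₄
  simp only [show ∀ X : Matrix (Fin 2) (Fin 2) ℂ, Matrix.of X = X from fun _ => rfl] at ha₄
  rw [Matrix.det_fin_two] at h₁ h₂ h₃
  simp only [Matrix.trace_fin_two, Matrix.mul_apply, Fin.sum_univ_two,
    Matrix.of_apply, Matrix.cons_val', Matrix.cons_val_zero, Matrix.cons_val_one,
    Matrix.head_cons, Matrix.empty_val', Matrix.cons_val_fin_one, Matrix.head_fin_const]
    at ha₁ ha₂ ha₃ ha₄ hx hy hz
  subst ha₁ ha₂ ha₃ ha₄ hx hy hz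
  linear_combination
    (2 + (-1) * (M₃ 1 1) * (M₃ 1 1) + (-1) * (M₃ 0 0) * (M₃ 0 0) + (-1) * (M₂ 1 1) * (M₂ 1 1) + (M₂ 1 1) * (M₂ 1 1) * (M₃ 0 0) * (M₃ 1 1) + (-1) * (M₂ 1 0) * (M₂ 1 1) * (M₃ 0 1) * (M₃ 1 1) + (M₂ 1 0) * (M₂ 1 1) * (M₃ 0 0) * (M₃ 0 1) + (-1) * (M₂ 1 0) * (M₂ 1 0) * (M₃ 0 1) * (M₃ 0 1) + (-1) * (M₂ 0 1) * (M₂ 1 1) * (M₃ 1 0) * (M₃ 1 1) + (M₂ 0 1) * (M₂ 1 1) * (M₃ 0 0) * (M₃ 1 0) + (-1) * (M₂ 0 1) * (M₂ 0 1) * (M₃ 1 0) * (M₃ 1 0) + (M₂ 0 0) * (M₂ 1 1) * (M₃ 1 1) * (M₃ 1 1) + (-2) * (M₂ 0 0) * (M₂ 1 1) * (M₃ 0 0) * (M₃ 1 1) + (M₂ 0 0) * (M₂ 1 1) * (M₃ 0 0) * (M₃ 0 0) + (M₂ 0 0) * (M₂ 1 0) * (M₃ 0 1) * (M₃ 1 1)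 + (-1) * (M₂ 0 0) * (M₂ 1 0) * (M₃ 0 0) * (M₃ 0 1) + (M₂ 0 0) * (M₂ 0 1) * (M₃ 1 0) * (M₃ 1 1) + (-1) * (M₂ 0 0) * (M₂ 0 1) * (M₃ 0 0) * (M₃ 1 0) + (-1) * (M₂ 0 0) * (M₂ 0 0) + (M₂ 0 0) * (M₂ 0 0) * (M₃ 0 0) * (M₃ 1 1)) * h₁ +
    (2 + (-2) * (M₃ 0 0) * (M₃ 1 1) + (-1) * (M₁ 1 1) * (M₁ 1 1) + (M₁ 1 1) * (M₁ 1 1) * (M₃ 0 0) * (M₃ 1 1) + (-1) * (M₁ 1 0) * (M₁ 1 1) * (M₃ 0 1) * (M₃ 1 1) + (M₁ 1 0) * (M₁ 1 1) * (M₃ 0 0) * (M₃ 0 1) + (-1) * (M₁ 1 0) * (M₁ 1 0) * (M₃ 0 1) * (M₃ 0 1) + (-1) * (M₁ 0 1) * (M₁ 1 1) * (M₃ 1 0) * (M₃ 1 1) + (M₁ 0 1) * (M₁ 1 1) * (M₃ 0 0) * (M₃ 1 0) + (M₁ 0 1) * (M₁ 1 0) * (M₃ 1 1) * (M₃ 1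 1) + (-2) * (M₁ 0 1) * (M₁ 1 0) * (M₃ 0 0) * (M₃ 1 1) + (M₁ 0 1) * (M₁ 1 0) * (M₃ 0 0) * (M₃ 0 0) + (-1) * (M₁ 0 1) * (M₁ 0 1) * (M₃ 1 0) * (M₃ 1 0) + (M₁ 0 0) * (M₁ 1 0) * (M₃ 0 1) * (M₃ 1 1) + (-1) * (M₁ 0 0) * (M₁ 1 0) * (M₃ 0 0) * (M₃ 0 1) + (M₁ 0 0) * (M₁ 0 1) * (M₃ 1 0) * (M₃ 1 1) + (-1) * (M₁ 0 0) * (M₁ 0 1) * (M₃ 0 0) * (M₃ 1 0) + (-1) * (M₁ 0 0) * (M₁ 0 0) + (M₁ 0 0) * (M₁ 0 0) * (M₃ 0 0) * (M₃ 1 1)) * h₂ +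
    ((-2) * (M₂ 0 1) * (M₂ 1 0) + (M₁ 1 1) * (M₁ 1 1) * (M₂ 0 1) * (M₂ 1 0) + (-1) * (M₁ 1 0) * (M₁ 1 1) * (M₂ 0 1) * (M₂ 1 1) + (M₁ 1 0) * (M₁ 1 1) * (M₂ 0 0) * (M₂ 0 1) + (-1) * (M₁ 1 0) * (M₁ 1 0) * (M₂ 0 1) * (M₂ 0 1) + (-1) * (M₁ 0 1) * (M₁ 1 1) * (M₂ 1 0) * (M₂ 1 1) + (M₁ 0 1) * (M₁ 1 1) * (M₂ 0 0) * (M₂ 1 0) + (-2) * (M₁ 0 1) * (M₁ 1 0) + (M₁ 0 1) * (M₁ 1 0) * (M₂ 1 1) * (M₂ 1 1) + (-2) * (M₁ 0 1) * (M₁ 1 0) * (M₂ 0 1) * (M₂ 1 0) + (M₁ 0 1) * (M₁ 1 0) * (M₂ 0 0) * (M₂ 0 0) + (-1) * (M₁ 0 1) * (M₁ 0 1) * (M₂ 1 0) * (M₂ 1 0) + (M₁ 0 0) * (M₁ 1 0) * (M₂ 0 1) * (M₂ 1 1) + (-1) * (M₁ 0 0) * (M₁ 1 0) * (M₂ 0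 0) * (M₂ 0 1) + (M₁ 0 0) * (M₁ 0 1) * (M₂ 1 0) * (M₂ 1 1) + (-1) * (M₁ 0 0) * (M₁ 0 1) * (M₂ 0 0) * (M₂ 1 0) + (M₁ 0 0) * (M₁ 0 0) * (M₂ 0 1) * (M₂ 1 0)) * h₃
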